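/- Suppose X is a reflexive Banach space and Θ_j is weakly closed for every j ∈ J. Then for x̄ ∈ S and r ≥ 0, the following are equivalent: (a) x̄ is an optimal solution of the generalized Sylvester problem with radius r, i.e., Ω_i ⊆ x̄ + r•F for all i ∈ I, (x̄ + r•F) ∩ Θ_j ≠ ∅ for all j ∈ J, and for every x ∈ S and t ≥ 0 satisfying Ω_i ⊆ x + t•F for all i ∈ I and (x + t•F) ∩ Θ_j ≠ ∅ for all j ∈ J, one has r ≤ t; (b) x̄ minimizes G over S and r = G(x̄). -/

import Mathlib

open Set Pointwise Filter Topology Bornology Function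

variable {X : Type*} [NormedAddCommGroup X] [NormedSpace ℝ X]

/-- The Minkowski gauge of `F`: `ρ_F(x) = inf {t ≥ 0 : x ∈ t • F}`. -/
noncomputable def rhoF (F : Set X) (x : X) : ℝ :=
  sInf {t : ℝ | 0 ≤ t ∧ x ∈ t • F}

/-- The maximal time function `C_F(x; Q) = sup {ρ_F(q - x) : q ∈ Q}`. -/
noncomputable def maxTime (F Q : Set X) (x : X) : ℝ :=
  sSup ((fun q => rhoF F (q - x)) '' Q)

/-- The minimal time function `T_F(x; Θ) = inf {ρ_F(q - x) : q ∈ Θ}`. -/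
noncomputable def minTime (F Θ : Set X) (x : X) : ℝ :=
  sInf ((fun q => rhoF F (q - x)) '' Θ)

/-- `G(x) = max {C_F(x; Ω_i), T_F(x; Θ_j) : i ∈ I, j ∈ J}`. -/
noncomputable def GFun {ι κ : Type*} (F : Set X) (I : Finset ι) (J : Finset κ)
    (Ω : ι → Set X) (Θ : κ → Set X) (x : X) : ℝ :=
  sSup ((fun i => maxTime F (Ω i) x) '' ↑I ∪ (fun j => minTime F (Θ j) x) '' ↑J)

/-- `H(x) = Σ_{i∈I} C_F(x; Ω_i) + Σ_{j∈J} T_F(x; Θ_j)`. -/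
noncomputable def HFun {ι κ : Type*} (F : Set X) (I : Finset ι) (J : Finset κ)
    (Ω : ι → Set X) (Θ : κ → Set X) (x : X) : ℝ :=
  ∑ i ∈ I, maxTime F (Ω i) x + ∑ j ∈ J, minTime F (Θ j) x

/-- A set is weakly closed if it is closed in the weak topology on `Y`. -/
def WeaklyClosed (Y : Type*) [NormedAddCommGroup Y] [NormedSpace ℝ Y] (A : Set Y) : Prop :=
  IsClosed (toWeakSpace ℝ Y '' A)

/-- A normed space is reflexive if the canonical embedding into its double dual is surjective. -/
def IsReflexiveSpace (Y : Type*) [NormedAddCommGroup Y] [NormedSpace ℝ Y] : Prop :=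
  Function.Surjective (NormedSpace.inclusionInDoubleDual ℝ Y)

lemma mem_singleton_add_iff {x q : X} {s : Set X} : q ∈ ({x} : Set X) + s ↔ q - x ∈ s := by
  simp only [Set.mem_add, Set.mem_singleton_iff]
  constructor
  · rintro ⟨a, rfl, b, hb, rfl⟩; simpa using hb
  · intro h; exact ⟨x, rfl, q - x, h, by abel⟩

lemma rhoF_eq_gauge {F : Set X} (hFne : F.Nonempty) (x : X) : rhoF F x = gauge F x := by
  by_cases hx : x = 0
  · subst hx
    rw [gauge_zero]
    have h0 : (0:ℝ) ∈ {t : ℝ | 0 ≤ t ∧ (0:X) ∈ t • F} := by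
      refine ⟨le_refl _, ?_⟩
      rw [zero_smul_set hFne]
      exact rfl
    exact le_antisymm (csInf_le ⟨0, fun t ht => ht.1⟩ h0) (le_csInf ⟨0, h0⟩ fun t ht => ht.1)
  · unfold rhoF gauge
    congr 1
    ext t
    simp only [mem_setOf_eq]
    constructor
    · rintro ⟨h1, h2⟩
      refine ⟨h1.lt_of_ne ?_, h2⟩
      rintro rfl
      rw [zero_smul_set hFne] at h2
      exact hx (by simpa using h2)
    · rintro ⟨h1, h2⟩; exact ⟨h1.le, h2⟩

lemma rhoF_nonneg {F : Set X} (hFne : F.Nonempty) (x : X) : 0 ≤ rhoF F x := by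
  rw [rhoF_eq_gauge hFne]; exact gauge_nonneg x

section Gauge

variable {F : Set X} (hFc : IsClosed F) (hFb : IsBounded F) (hFconv : Convex ℝ F)
  (hF0 : (0 : X) ∈ interior F)

include hF0 in
lemma hFnhds : F ∈ 𝓝 (0 : X) := mem_interior_iff_mem_nhds.mp hF0

include hFc hFb hFconv hF0 in
lemma mem_smul_iff_rhoF_le {x : X} {t : ℝ} (ht : 0 ≤ t) : x ∈ t • F ↔ rhoF F x ≤ t := by
  have hFne : F.Nonempty := ⟨0, interior_subset hF0⟩
  have habs : Absorbent ℝ F := absorbent_nhds_zero (hFnhds hF0)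
  have hvb : Bornology.IsVonNBounded ℝ F := (NormedSpace.isVonNBounded_iff ℝ).mpr hFb
  rw [rhoF_eq_gauge hFne]
  constructor
  · exact gauge_le_of_mem ht
  · intro h
    rcases ht.eq_or_lt with rfl | htpos
    · have h0 : gauge F x = 0 := le_antisymm h (gauge_nonneg x)
      have hx0 : x = 0 := (gauge_eq_zero habs hvb).mp h0
      subst hx0
      rw [zero_smul_set hFne]
      exact rfl
    · have h1 : gauge F (t⁻¹ • x) ≤ 1 := by
        rw [gauge_smul_of_nonneg (inv_nonneg.mpr ht)]
        simp only [smul_eq_mul]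
        rw [inv_mul_le_iff₀ htpos, mul_one]
        exact h
      have hx : t⁻¹ • x ∈ F := by
        have := (gauge_le_one_iff_mem_closure hFconv (hFnhds hF0)).mp h1
        rwa [hFc.closure_eq] at this
      refine ⟨t⁻¹ • x, hx, ?_⟩
      show t • (t⁻¹ • x) = x
      rw [smul_smul, mul_inv_cancel₀ htpos.ne', one_smul]

include hFconv hF0 in
lemma rhoF_le_div {x : X} : ∃ r > (0:ℝ), ∀ y : X, rhoF F y ≤ ‖y‖ / r := by
  have hFne : F.Nonempty := ⟨0, interior_subset hF0⟩
  obtain ⟨r, hr, hball⟩ := Metric.mem_nhds_iff.mp (hFnhds hF0)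
  refine ⟨r, hr, fun y => ?_⟩
  rw [rhoF_eq_gauge hFne, le_div_iff₀ hr]
  have := mul_gauge_le_norm (x := y) hball
  linarith [this]

end Gauge


section Times

variable {F : Set X} (hFc : IsClosed F) (hFb : IsBounded F) (hFconv : Convex ℝ F)
  (hF0 : (0 : X) ∈ interior F)

include hFconv hF0 in
lemma bddAbove_rho_image {Ω : Set X} (hΩb : IsBounded Ω) (x : X) :
    BddAbove ((fun q => rhoF F (q - x)) '' Ω) := by
  obtain ⟨r, hr, hle⟩ := rhoF_le_div hFconv hF0 (x := x)
  obtain ⟨R, hR⟩ := isBounded_iff_forall_norm_le.mp hΩb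
  refine ⟨(R + ‖x‖) / r, ?_⟩
  rintro _ ⟨q, hq, rfl⟩
  refine (hle _).trans ?_
  have h1 : ‖q - x‖ ≤ R + ‖x‖ := (norm_sub_le _ _).trans (by linarith [hR q hq])
  gcongr

include hFc hFb hFconv hF0 in
lemma maxTime_le_iff {Ω : Set X} (hΩne : Ω.Nonempty) (hΩb : IsBounded Ω) {x : X} {t : ℝ}
    (ht : 0 ≤ t) : maxTime F Ω x ≤ t ↔ Ω ⊆ ({x} : Set X) + t • F := by
  constructor
  · intro h q hq
    rw [mem_singleton_add_iff, mem_smul_iff_rhoF_le hFc hFb hFconv hF0 ht]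
    exact le_trans (le_csSup (bddAbove_rho_image hFconv hF0 hΩb x) ⟨q, hq, rfl⟩) h
  · intro h
    apply csSup_le (hΩne.image _)
    rintro _ ⟨q, hq, rfl⟩
    exact (mem_smul_iff_rhoF_le hFc hFb hFconv hF0 ht).mp (mem_singleton_add_iff.mp (h hq))

include hFconv hF0 in
lemma maxTime_nonneg {Ω : Set X} (hΩne : Ω.Nonempty) (hΩb : IsBounded Ω) (x : X) :
    0 ≤ maxTime F Ω x := by
  obtain ⟨q, hq⟩ := hΩne
  exact le_trans (rhoF_nonneg ⟨0, interior_subset hF0⟩ _)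
    (le_csSup (bddAbove_rho_image hFconv hF0 hΩb x) ⟨q, hq, rfl⟩)

include hF0 in
lemma minTime_nonneg {Θ : Set X} (hΘne : Θ.Nonempty) (x : X) : 0 ≤ minTime F Θ x :=
  le_csInf (hΘne.image _) (by rintro _ ⟨q, hq, rfl⟩; exact rhoF_nonneg ⟨0, interior_subset hF0⟩ _)

include hFc hFb hFconv hF0 in
lemma minTime_le_of_inter {Θ : Set X} {x : X} {t : ℝ} (ht : 0 ≤ t)
    (h : ((({x} : Set X) + t • F) ∩ Θ).Nonempty) : minTime F Θ x ≤ t := by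
  obtain ⟨q, hq1, hq2⟩ := h
  have h1 : rhoF F (q - x) ≤ t :=
    (mem_smul_iff_rhoF_le hFc hFb hFconv hF0 ht).mp (mem_singleton_add_iff.mp hq1)
  refine le_trans (csInf_le ⟨0, ?_⟩ ⟨q, hq2, rfl⟩) h1
  rintro _ ⟨p, hp, rfl⟩
  exact rhoF_nonneg ⟨0, interior_subset hF0⟩ _

end Times

lemma weaklyClosed_of_closed_convex {A : Set X} (hAc : IsClosed A) (hAconv : Convex ℝ A) :
    WeaklyClosed X A := by
  unfold WeaklyClosed
  have h := hAconv.toWeakSpace_closure (𝕜 := ℝ)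
  rw [hAc.closure_eq] at h
  rw [h]
  exact isClosed_closure

open NormedSpace in
lemma isCompact_toWeakSpace_image (hrefl : IsReflexiveSpace X) {A : Set X}
    (hAc : IsClosed A) (hAb : IsBounded A) (hAconv : Convex ℝ A) :
    IsCompact (toWeakSpace ℝ X '' A) := by
  classical
  set ι := inclusionInDoubleDual ℝ X with hιdef
  have hg : ∀ y, ι (surjInv hrefl y) = y := surjInv_eq hrefl
  have hιinj : Function.Injective ι := by
    intro a b hab
    have ha : ‖ι (a - b)‖ = ‖a - b‖ := by
      have : ι (a - b) = inclusionInDoubleDualLi (𝕜 := ℝ) (a - b) := rfl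
      rw [this, (inclusionInDoubleDualLi (𝕜 := ℝ)).norm_map]
    have : ι (a - b) = 0 := by rw [map_sub, hab, sub_self]
    rw [this] at ha; replace ha : (0:ℝ) = ‖a - b‖ := by rw [← ha]; exact (norm_zero (E := StrongDual ℝ (StrongDual ℝ X))).symm
    have := norm_eq_zero.mp ha.symm
    rwa [sub_eq_zero] at this
  -- ψ : WeakDual → WeakSpace, continuous
  set ψ : WeakDual ℝ (StrongDual ℝ X) → WeakSpace ℝ X :=
    fun y => toWeakSpace ℝ X (surjInv hrefl y) with hψdef
  have hψ : Continuous ψ := by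
    apply WeakBilin.continuous_of_continuous_eval
    intro f
    have heq : (fun y : WeakDual ℝ (StrongDual ℝ X) => (topDualPairing ℝ X).flip (ψ y) f)
        = fun y : WeakDual ℝ (StrongDual ℝ X) => topDualPairing ℝ (StrongDual ℝ X) y f := by
      ext y
      show f (surjInv hrefl y) = y f
      conv_rhs => rw [← hg y]
      rfl
    rw [heq]
    exact WeakBilin.eval_continuous _ f
  -- φ : WeakSpace → WeakDual, continuous
  set φ : WeakSpace ℝ X → WeakDual ℝ (StrongDual ℝ X) :=
    fun z => ι ((toWeakSpace ℝ X).symm z) with hφdef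
  have hφ : Continuous φ := by
    apply WeakBilin.continuous_of_continuous_eval
    intro f
    exact WeakBilin.eval_continuous ((topDualPairing ℝ X).flip) f
  set S : Set (WeakSpace ℝ X) := toWeakSpace ℝ X '' A with hSdef
  have hSclosed : IsClosed S := weaklyClosed_of_closed_convex hAc hAconv
  have hψφ : ∀ z : WeakSpace ℝ X, ψ (φ z) = z := by
    intro z
    show toWeakSpace ℝ X (surjInv hrefl (ι ((toWeakSpace ℝ X).symm z))) = z
    have := hιinj (hg (ι ((toWeakSpace ℝ X).symm z)))
    rw [this]
    exact (toWeakSpace ℝ X).apply_symm_apply z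
  have himg : φ '' S = ψ ⁻¹' S := by
    ext y
    constructor
    · rintro ⟨z, hz, rfl⟩
      show ψ (φ z) ∈ S
      rw [hψφ z]; exact hz
    · intro hy
      refine ⟨ψ y, hy, ?_⟩
      show ι (surjInv hrefl y) = y
      exact hg y
  obtain ⟨R, hR⟩ := hAb.subset_closedBall 0
  have hsub : φ '' S ⊆ WeakDual.toStrongDual ⁻¹' Metric.closedBall 0 R := by
    rintro _ ⟨z, ⟨a, ha, rfl⟩, rfl⟩
    have : ‖ι a‖ = ‖a‖ := (inclusionInDoubleDualLi (𝕜 := ℝ)).norm_map a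
    simp only [Set.mem_preimage, Metric.mem_closedBall, dist_zero_right]
    refine (dist_zero_right (ι a)).trans_le ?_
    rw [this]
    simpa using Metric.mem_closedBall.mp (hR ha)
  have hcpt : IsCompact (φ '' S) := by
    refine IsCompact.of_isClosed_subset (WeakDual.isCompact_closedBall (𝕜 := ℝ) (E := StrongDual ℝ X) 0 R) ?_ hsub
    rw [himg]
    exact hSclosed.preimage hψ
  have : S = ψ '' (φ '' S) := by
    rw [Set.image_image]
    ext z
    constructor
    · intro hz; exact ⟨z, hz, hψφ z⟩
    · rintro ⟨w, hw, hwz⟩; exact ((hψφ w).symm.trans hwz) ▸ hw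
  rw [this]
  exact hcpt.image hψ

section Hard

variable {F : Set X} (hFc : IsClosed F) (hFb : IsBounded F) (hFconv : Convex ℝ F)
  (hF0 : (0 : X) ∈ interior F)

include hFconv hF0 in
lemma smul_set_mono_of_le {a b : ℝ} (ha : 0 ≤ a) (hab : a ≤ b) : a • F ⊆ b • F := by
  rcases (ha.trans hab).eq_or_lt with rfl | hb
  · rw [le_antisymm hab ha]
  rintro _ ⟨f, hf, rfl⟩
  refine ⟨(a / b) • f, ?_, ?_⟩
  · exact (hFconv.starConvex (interior_subset hF0)).smul_mem hf (by positivity) (by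
      rw [div_le_one hb]; exact hab)
  · show b • (a / b) • f = a • f
    rw [smul_smul, mul_div_cancel₀ a hb.ne']

include hFc hFb hFconv hF0 in
lemma isClosed_singleton_add_smul {x : X} {c : ℝ} (hc : 0 < c) :
    IsClosed (({x} : Set X) + c • F) := by
  have h1 : IsClosed (c • F) := (isClosedMap_smul_of_ne_zero hc.ne' F hFc)
  rw [Set.singleton_add]
  exact (Homeomorph.addLeft x).isClosedMap _ h1

include hFb in
lemma isBounded_singleton_add_smul {x : X} {c : ℝ} :
    IsBounded (({x} : Set X) + c • F) := by
  exact (Bornology.isBounded_singleton (x := x)).add (hFb.smul₀ c)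

include hFc hFb hFconv hF0 in
lemma inter_nonempty_of_minTime_le (hrefl : IsReflexiveSpace X) {Θ : Set X}
    (hΘne : Θ.Nonempty) (hΘw : WeaklyClosed X Θ) {x : X} {t : ℝ} (ht : 0 ≤ t)
    (h : minTime F Θ x ≤ t) : ((({x} : Set X) + t • F) ∩ Θ).Nonempty := by
  have hinj : Function.Injective (toWeakSpace ℝ X) := (toWeakSpace ℝ X).injective
  set c : ℕ → ℝ := fun n => t + 1 / (n + 1) with hcdef
  have hcpos : ∀ n : ℕ, 0 < c n := fun n => by positivity
  have hcanti : ∀ m n : ℕ, m ≤ n → c n ≤ c m := by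
    intro m n hmn
    have : (1 : ℝ) / (n + 1) ≤ 1 / (m + 1) := by
      apply one_div_le_one_div_of_le (by positivity)
      exact_mod_cast by omega
    simpa [hcdef] using this
  set K : ℕ → Set (WeakSpace ℝ X) :=
    fun n => toWeakSpace ℝ X '' (Θ ∩ (({x} : Set X) + c n • F)) with hKdef
  have hKne : ∀ n, (K n).Nonempty := by
    intro n
    have h1 : minTime F Θ x < c n := lt_of_le_of_lt h (by simp [hcdef]; positivity)
    obtain ⟨_, ⟨q, hqΘ, rfl⟩, hlt⟩ := exists_lt_of_csInf_lt (hΘne.image _) h1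
    refine ⟨_, ⟨q, ⟨hqΘ, ?_⟩, rfl⟩⟩
    rw [mem_singleton_add_iff, mem_smul_iff_rhoF_le hFc hFb hFconv hF0 (hcpos n).le]
    exact hlt.le
  have hmono : ∀ m n : ℕ, m ≤ n → K n ⊆ K m := by
    intro m n hmn
    apply Set.image_mono
    apply Set.inter_subset_inter_right
    intro y hy
    rw [mem_singleton_add_iff] at hy ⊢
    exact smul_set_mono_of_le hFconv hF0 (hcpos n).le (hcanti m n hmn) hy
  have hKcl : ∀ n, IsClosed (K n) := by
    intro n
    rw [hKdef]
    simp only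
    rw [Set.image_inter hinj]
    exact IsClosed.inter hΘw
      (weaklyClosed_of_closed_convex (isClosed_singleton_add_smul hFc hFb hFconv hF0 (hcpos n))
        ((convex_singleton x).add (hFconv.smul (c n))))
  have hKcpt : ∀ n, IsCompact (K n) := by
    intro n
    have hsub : K n ⊆ toWeakSpace ℝ X '' (({x} : Set X) + c 0 • F) := by
      refine Set.Subset.trans (hmono 0 n (Nat.zero_le n)) (Set.image_mono ?_)
      exact Set.inter_subset_right
    refine IsCompact.of_isClosed_subset ?_ (hKcl n) hsub
    exact isCompact_toWeakSpace_image hrefl (isClosed_singleton_add_smul hFc hFb hFconv hF0 (hcpos 0))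
      (isBounded_singleton_add_smul hFb) ((convex_singleton x).add (hFconv.smul (c 0)))
  have hdir : Directed (· ⊇ ·) K := fun m n =>
    ⟨max m n, hmono m _ (le_max_left m n), hmono n _ (le_max_right m n)⟩
  obtain ⟨y, hy⟩ := IsCompact.nonempty_iInter_of_directed_nonempty_isCompact_isClosed
    K hdir hKne hKcpt hKcl
  have hy0 := Set.mem_iInter.mp hy 0
  obtain ⟨q, hq0, rfl⟩ := hy0
  have hqΘ : q ∈ Θ := hq0.1
  have hqmem : ∀ n : ℕ, q - x ∈ c n • F := by
    intro n
    obtain ⟨q', hq', heq⟩ := Set.mem_iInter.mp hy n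
    obtain rfl : q' = q := hinj heq
    exact mem_singleton_add_iff.mp hq'.2
  have hrho : rhoF F (q - x) ≤ t := by
    by_contra hlt
    push_neg at hlt
    obtain ⟨n, hn⟩ := exists_nat_one_div_lt (ε := rhoF F (q - x) - t) (by linarith)
    have := (mem_smul_iff_rhoF_le hFc hFb hFconv hF0 (hcpos n).le).mp (hqmem n)
    rw [hcdef] at this
    simp only at this
    linarith
  exact ⟨q, mem_singleton_add_iff.mpr ((mem_smul_iff_rhoF_le hFc hFb hFconv hF0 ht).mpr hrho), hqΘ⟩

end Hard


section Main

variable {ι κ : Type*} {F : Set X} {I : Finset ι} {J : Finset κ} {Ω : ι → Set X} {Θ : κ → Set X}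

lemma GSet_finite (x : X) :
    ((fun i => maxTime F (Ω i) x) '' ↑I ∪ (fun j => minTime F (Θ j) x) '' ↑J).Finite :=
  ((I.finite_toSet).image _).union ((J.finite_toSet).image _)

lemma GSet_nonempty (hIJ : I.Nonempty ∨ J.Nonempty) (x : X) :
    ((fun i => maxTime F (Ω i) x) '' ↑I ∪ (fun j => minTime F (Θ j) x) '' ↑J).Nonempty := by
  rcases hIJ with ⟨i, hi⟩ | ⟨j, hj⟩
  · exact ⟨_, Or.inl ⟨i, Finset.mem_coe.mpr hi, rfl⟩⟩
  · exact ⟨_, Or.inr ⟨j, Finset.mem_coe.mpr hj, rfl⟩⟩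

lemma GFun_le_iff (hIJ : I.Nonempty ∨ J.Nonempty) (x : X) (t : ℝ) :
    GFun F I J Ω Θ x ≤ t ↔
      (∀ i ∈ I, maxTime F (Ω i) x ≤ t) ∧ (∀ j ∈ J, minTime F (Θ j) x ≤ t) := by
  rw [GFun, csSup_le_iff (GSet_finite x).bddAbove (GSet_nonempty hIJ x)]
  constructor
  · intro h
    exact ⟨fun i hi => h _ (Or.inl ⟨i, Finset.mem_coe.mpr hi, rfl⟩),
           fun j hj => h _ (Or.inr ⟨j, Finset.mem_coe.mpr hj, rfl⟩)⟩
  · rintro ⟨h1, h2⟩ b (⟨i, hi, rfl⟩ | ⟨j, hj, rfl⟩)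
    · exact h1 i (Finset.mem_coe.mp hi)
    · exact h2 j (Finset.mem_coe.mp hj)

lemma GFun_nonneg (hF0 : (0 : X) ∈ interior F) (hFconv : Convex ℝ F)
    (hΩne : ∀ i ∈ I, (Ω i).Nonempty) (hΩb : ∀ i ∈ I, IsBounded (Ω i))
    (hΘne : ∀ j ∈ J, (Θ j).Nonempty)
    (hIJ : I.Nonempty ∨ J.Nonempty) (x : X) : 0 ≤ GFun F I J Ω Θ x := by
  rcases hIJ with ⟨i, hi⟩ | ⟨j, hj⟩
  · exact le_trans (maxTime_nonneg hFconv hF0 (hΩne i hi) (hΩb i hi) x)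
      (le_csSup (GSet_finite x).bddAbove (Or.inl ⟨i, Finset.mem_coe.mpr hi, rfl⟩))
  · exact le_trans (minTime_nonneg hF0 (hΘne j hj) x)
      (le_csSup (GSet_finite x).bddAbove (Or.inr ⟨j, Finset.mem_coe.mpr hj, rfl⟩))

lemma GFun_le_iff_feasible
    (hFc : IsClosed F) (hFb : IsBounded F) (hFconv : Convex ℝ F)
    (hF0 : (0 : X) ∈ interior F)
    (hΩne : ∀ i ∈ I, (Ω i).Nonempty) (hΩb : ∀ i ∈ I, IsBounded (Ω i))
    (hΘne : ∀ j ∈ J, (Θ j).Nonempty)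
    (hIJ : I.Nonempty ∨ J.Nonempty)
    (hrefl : IsReflexiveSpace X) (hΘw : ∀ j ∈ J, WeaklyClosed X (Θ j))
    (x : X) {t : ℝ} (ht : 0 ≤ t) :
    GFun F I J Ω Θ x ≤ t ↔
      ((∀ i ∈ I, Ω i ⊆ ({x} : Set X) + t • F) ∧
       (∀ j ∈ J, ((({x} : Set X) + t • F) ∩ Θ j).Nonempty)) := by
  rw [GFun_le_iff hIJ]
  constructor
  · rintro ⟨h1, h2⟩
    refine ⟨fun i hi => (maxTime_le_iff hFc hFb hFconv hF0 (hΩne i hi) (hΩb i hi) ht).mp (h1 i hi),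
      fun j hj => inter_nonempty_of_minTime_le hFc hFb hFconv hF0 hrefl (hΘne j hj) (hΘw j hj)
        ht (h2 j hj)⟩
  · rintro ⟨h1, h2⟩
    exact ⟨fun i hi => (maxTime_le_iff hFc hFb hFconv hF0 (hΩne i hi) (hΩb i hi) ht).mpr (h1 i hi),
      fun j hj => minTime_le_of_inter hFc hFb hFconv hF0 ht (h2 j hj)⟩

end Main


/-- Proposition 2.6. -/
theorem stmt5 [CompleteSpace X]
    {ι κ : Type*} (F : Set X) (I : Finset ι) (J : Finset κ)
    (Ω : ι → Set X) (Θ : κ → Set X) (S : Set X)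
    (hFc : IsClosed F) (hFb : IsBounded F) (hFconv : Convex ℝ F)
    (hF0 : (0 : X) ∈ interior F)
    (hΩne : ∀ i ∈ I, (Ω i).Nonempty) (hΩc : ∀ i ∈ I, IsClosed (Ω i))
    (hΩb : ∀ i ∈ I, IsBounded (Ω i))
    (hΘne : ∀ j ∈ J, (Θ j).Nonempty) (hΘc : ∀ j ∈ J, IsClosed (Θ j))
    (hSne : S.Nonempty) (hSc : IsClosed S)
    (hIJ : I.Nonempty ∨ J.Nonempty)
    (hrefl : IsReflexiveSpace X) (hΘw : ∀ j ∈ J, WeaklyClosed X (Θ j))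
    (xbar : X) (hxbar : xbar ∈ S) (r : ℝ) (hr : 0 ≤ r) :
    ((∀ i ∈ I, Ω i ⊆ ({xbar} : Set X) + r • F) ∧
      (∀ j ∈ J, ((({xbar} : Set X) + r • F) ∩ Θ j).Nonempty) ∧
      (∀ x ∈ S, ∀ t : ℝ, 0 ≤ t → (∀ i ∈ I, Ω i ⊆ ({x} : Set X) + t • F) →
        (∀ j ∈ J, ((({x} : Set X) + t • F) ∩ Θ j).Nonempty) → r ≤ t)) ↔
    ((∀ x ∈ S, GFun F I J Ω Θ xbar ≤ GFun F I J Ω Θ x) ∧ r = GFun F I J Ω Θ xbar) := by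
  have hfeas := fun (x : X) {t : ℝ} (ht : 0 ≤ t) =>
    GFun_le_iff_feasible (Ω := Ω) (Θ := Θ) hFc hFb hFconv hF0 hΩne hΩb hΘne hIJ hrefl hΘw x ht
  have hGnonneg := fun (x : X) => GFun_nonneg (Ω := Ω) (Θ := Θ) hF0 hFconv hΩne hΩb hΘne hIJ x
  constructor
  · rintro ⟨h1, h2, h3⟩
    have hGxbar_le : GFun F I J Ω Θ xbar ≤ r := (hfeas xbar hr).mpr ⟨h1, h2⟩
    have hrle : ∀ x ∈ S, r ≤ GFun F I J Ω Θ x := by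
      intro x hx
      have ht := hGnonneg x
      obtain ⟨g1, g2⟩ := (hfeas x ht).mp le_rfl
      exact h3 x hx _ ht g1 g2
    have : r = GFun F I J Ω Θ xbar := le_antisymm (hrle xbar hxbar) hGxbar_le
    exact ⟨fun x hx => this ▸ hrle x hx, this⟩
  · rintro ⟨hmin, rfl⟩
    obtain ⟨g1, g2⟩ := (hfeas xbar hr).mp le_rfl
    refine ⟨g1, g2, fun x hx t ht f1 f2 => ?_⟩
    exact le_trans (hmin x hx) ((hfeas x ht).mpr ⟨f1, f2⟩)
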